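/- There exists a constant C > 0 such that for all real x ≥ 3, the sum of the reciprocals of the primes p ≤ x satisfies Σ_{p ≤ x, p prime} 1/p ≤ C · ln ln x. -/

import Mathlib

open Finset Real

private noncomputable def pf (n : ℕ) : ℝ := if n.Prime then 1 / n else 0

private lemma pf_nonneg (n : ℕ) : 0 ≤ pf n := by
  unfold pf; split <;> positivity

private lemma card_mul_le (k : ℕ) :
    ((Finset.Ioc (2^k) (2^(k+1))).filter Nat.Prime).card * k ≤ 2^(k+2) := by
  set s := (Finset.Ioc (2^k) (2^(k+1))).filter Nat.Prime with hs
  have h1 : (2^k)^s.card ≤ ∏ p ∈ s, p := by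
    apply Finset.pow_card_le_prod
    intro p hp
    rw [hs, Finset.mem_filter, Finset.mem_Ioc] at hp
    omega
  have h2 : ∏ p ∈ s, p ≤ primorial (2^(k+1)) := by
    unfold primorial
    apply Finset.prod_le_prod_of_subset_of_one_le'
    · intro p hp
      rw [hs, Finset.mem_filter, Finset.mem_Ioc] at hp
      rw [Finset.mem_filter, Finset.mem_range]
      exact ⟨by omega, hp.2⟩
    · intro i hi _
      exact (Finset.mem_filter.mp hi).2.one_lt.le
  have h3 : primorial (2^(k+1)) ≤ 4 ^ (2^(k+1)) := primorial_le_4_pow _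
  have h4 : (2:ℕ)^(k * s.card) ≤ 2^(2^(k+2)) := by
    calc (2:ℕ)^(k * s.card) = (2^k)^s.card := by rw [pow_mul]
    _ ≤ ∏ p ∈ s, p := h1
    _ ≤ 4 ^ (2^(k+1)) := h2.trans h3
    _ = 2^(2^(k+2)) := by rw [show (4:ℕ) = 2^2 by norm_num, ← pow_mul]; ring_nf
  have := (Nat.pow_le_pow_iff_right (by norm_num : 1 < 2)).mp h4
  rwa [mul_comm]

private lemma sum_Ioc_le (k : ℕ) (hk : 1 ≤ k) :
    ∑ p ∈ Finset.Ioc (2^k) (2^(k+1)), pf p ≤ 4 / k := by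
  have hkpos : (0:ℝ) < k := by exact_mod_cast Nat.lt_of_lt_of_le Nat.zero_lt_one hk
  set s := (Finset.Ioc (2^k) (2^(k+1))).filter Nat.Prime with hs
  have h1 : ∑ p ∈ Finset.Ioc (2^k) (2^(k+1)), pf p = ∑ p ∈ s, (1:ℝ)/p := by
    rw [hs, Finset.sum_filter]; simp [pf]
  have h2 : ∑ p ∈ s, (1:ℝ)/p ≤ s.card • ((2:ℝ)^k)⁻¹ := by
    apply Finset.sum_le_card_nsmul
    intro p hp
    rw [hs, Finset.mem_filter, Finset.mem_Ioc] at hp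
    rw [one_div]
    apply inv_anti₀ (by positivity)
    exact_mod_cast hp.1.1.le
  have hcard : (s.card : ℝ) * k ≤ 2^(k+2) := by
    exact_mod_cast card_mul_le k
  rw [h1]
  refine h2.trans ?_
  rw [nsmul_eq_mul, ← div_eq_mul_inv, div_le_div_iff₀ (by positivity) hkpos]
  calc (s.card : ℝ) * k ≤ 2^(k+2) := hcard
  _ = 4 * 2^k := by ring

private lemma decomp (K : ℕ) :
    ∑ p ∈ Finset.Ioc 1 (2^(K+1)), pf p
      = ∑ k ∈ Finset.range (K+1), ∑ p ∈ Finset.Ioc (2^k) (2^(k+1)), pf p := by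
  induction K with
  | zero => simp
  | succ K ih =>
      rw [Finset.sum_range_succ, ← ih,
        Finset.sum_Ioc_consecutive _ Nat.one_le_two_pow
          (Nat.pow_le_pow_right (by norm_num) (by omega))]

theorem sum_one_div_primes_upper_bound :
    ∃ C : ℝ, 0 < C ∧ ∀ x : ℝ, 3 ≤ x →
      ∑ p ∈ Finset.filter Nat.Prime (Finset.range (⌊x⌋₊ + 1)), (1 : ℝ) / p ≤
        C * Real.log (Real.log x) := by
  refine ⟨100, by norm_num, fun x hx => ?_⟩
  have hx0 : (0:ℝ) < x := by linarith
  set n := ⌊x⌋₊ with hn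
  have hn3 : 3 ≤ n := Nat.le_floor (by exact_mod_cast hx)
  set K := Nat.log 2 n with hK
  have hK1 : 1 ≤ K := (Nat.le_log_iff_pow_le (by norm_num) (by omega)).mpr (by omega)
  have hKn : 2^K ≤ n := Nat.pow_log_le_self 2 (by omega)
  have hnK : n < 2^(K+1) := Nat.lt_pow_succ_log_self (by norm_num) n
  -- step 1: bound by sum of pf over Ioc 1 (2^(K+1))
  have hsub : (Finset.range (n+1)).filter Nat.Prime ⊆ Finset.Ioc 1 (2^(K+1)) := by
    intro p hp
    rw [Finset.mem_filter, Finset.mem_range] at hp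
    rw [Finset.mem_Ioc]
    exact ⟨hp.2.one_lt, by omega⟩
  have h1 : ∑ p ∈ (Finset.range (n+1)).filter Nat.Prime, (1:ℝ)/p
      ≤ ∑ p ∈ Finset.Ioc 1 (2^(K+1)), pf p := by
    have : ∑ p ∈ (Finset.range (n+1)).filter Nat.Prime, (1:ℝ)/p
        = ∑ p ∈ (Finset.range (n+1)).filter Nat.Prime, pf p :=
      Finset.sum_congr rfl fun p hp => by
        simp [pf, (Finset.mem_filter.mp hp).2]
    rw [this]
    exact Finset.sum_le_sum_of_subset_of_nonneg hsub fun i _ _ => pf_nonneg i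
  rw [decomp K] at h1
  -- step 2: bound the dyadic sums
  have h2 : ∑ k ∈ Finset.range (K+1), ∑ p ∈ Finset.Ioc (2^k) (2^(k+1)), pf p
      ≤ 1/2 + 4 * (1 + Real.log K) := by
    rw [Finset.range_eq_Ico,
      ← Finset.sum_Ico_consecutive _ (by norm_num : 0 ≤ 1) (by omega : 1 ≤ K+1)]
    have hzero : ∑ k ∈ Finset.Ico 0 1, ∑ p ∈ Finset.Ioc (2^k) (2^(k+1)), pf p = 1/2 := by
      rw [show Finset.Ico 0 1 = {0} from rfl, Finset.sum_singleton]
      rw [show Finset.Ioc (2^0) (2^(0+1)) = {2} by decide, Finset.sum_singleton]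
      simp [pf, Nat.prime_two]
    have hrest : ∑ k ∈ Finset.Ico 1 (K+1), ∑ p ∈ Finset.Ioc (2^k) (2^(k+1)), pf p
        ≤ 4 * (1 + Real.log K) := by
      calc ∑ k ∈ Finset.Ico 1 (K+1), ∑ p ∈ Finset.Ioc (2^k) (2^(k+1)), pf p
          ≤ ∑ k ∈ Finset.Ico 1 (K+1), 4 / (k:ℝ) :=
            Finset.sum_le_sum fun k hk =>
              sum_Ioc_le k (Finset.mem_Ico.mp hk).1
        _ = 4 * ∑ k ∈ Finset.Icc 1 K, ((k:ℝ))⁻¹ := by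
            rw [Finset.mul_sum, show Finset.Ico 1 (K+1) = Finset.Icc 1 K from rfl]
            exact Finset.sum_congr rfl fun k _ => by rw [div_eq_mul_inv]
        _ = 4 * (harmonic K : ℝ) := by
            rw [harmonic_eq_sum_Icc]
            push_cast
            ring
        _ ≤ 4 * (1 + Real.log K) := by
            have := harmonic_le_one_add_log K
            linarith
    linarith [hzero, hrest]
  -- step 3: log K ≤ log 2 + log (log x)
  have hlx : (109:ℝ)/100 ≤ Real.log x := by
    have h3 : Real.log 3 ≤ Real.log x := Real.log_le_log (by norm_num) hx
    have : (109:ℝ)/100 ≤ Real.log 3 := by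
      rw [Real.le_log_iff_exp_le (by norm_num : (0:ℝ) < 3)]
      have he : Real.exp (109/100) = Real.exp 1 * Real.exp (9/100) := by
        rw [← Real.exp_add]; norm_num
      have h9 : Real.exp (9/100) ≤ 100/91 := by
        have h := Real.add_one_le_exp (-(9/100) : ℝ)
        have h' : (91:ℝ)/100 ≤ (Real.exp (9/100))⁻¹ := by
          rw [← Real.exp_neg]; linarith
        calc Real.exp (9/100) = ((Real.exp (9/100))⁻¹)⁻¹ := (inv_inv _).symm
        _ ≤ ((91:ℝ)/100)⁻¹ := inv_anti₀ (by norm_num) h'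
        _ = 100/91 := by norm_num
      calc Real.exp (109/100) = Real.exp 1 * Real.exp (9/100) := he
      _ ≤ 2.7182818286 * (100/91) := by
          apply mul_le_mul Real.exp_one_lt_d9.le h9 (Real.exp_pos _).le (by norm_num)
      _ ≤ 3 := by norm_num
    linarith
  have hlK : Real.log K ≤ Real.log 2 + Real.log (Real.log x) := by
    have hK2 : (K:ℝ) ≤ 2 * Real.log x := by
      have h2K : ((2:ℕ)^K : ℝ) ≤ x := by
        calc ((2:ℕ)^K : ℝ) ≤ (n:ℝ) := by exact_mod_cast hKn
        _ ≤ x := Nat.floor_le hx0.le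
      have hlog : (K:ℝ) * Real.log 2 ≤ Real.log x := by
        have := Real.log_le_log (by positivity) h2K
        rwa [show ((2:ℕ)^K : ℝ) = (2:ℝ)^K by push_cast; ring, Real.log_pow] at this
      nlinarith [Real.log_two_gt_d9]
    calc Real.log K ≤ Real.log (2 * Real.log x) := by
          apply Real.log_le_log (by exact_mod_cast Nat.lt_of_lt_of_le Nat.zero_lt_one hK1) hK2
      _ = Real.log 2 + Real.log (Real.log x) := Real.log_mul (by norm_num) (by linarith)
  -- step 4: numerics
  have hL : (9:ℝ)/109 ≤ Real.log (Real.log x) := by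
    calc (9:ℝ)/109 = 1 - (109/100)⁻¹ := by norm_num
    _ ≤ 1 - (Real.log x)⁻¹ := by
        have : (Real.log x)⁻¹ ≤ ((109:ℝ)/100)⁻¹ := inv_anti₀ (by norm_num) hlx
        linarith
    _ ≤ Real.log (Real.log x) := Real.one_sub_inv_le_log_of_pos (by linarith)
  have hl2 : Real.log 2 < 0.6931471808 := Real.log_two_lt_d9
  calc ∑ p ∈ (Finset.range (n+1)).filter Nat.Prime, (1:ℝ)/p
      ≤ 1/2 + 4 * (1 + Real.log K) := h1.trans h2
    _ ≤ 1/2 + 4 * (1 + (Real.log 2 + Real.log (Real.log x))) := by linarith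
    _ ≤ 100 * Real.log (Real.log x) := by nlinarith
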